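/- Let (p,q,k) be a primary generating triple of a hinge angle α (one with p²+q² minimal among generating triples of α). Then the set of all generating triples of α equals { ((2n+1)p, (2n+1)q, (2n+1)k + n) : n ∈ ℤ }. -/

import Mathlib

/-- (p,q,k) is a generating triple of α -/
def GenTriple (α : ℝ) (p q k : ℤ) : Prop :=
  2 * (p : ℝ) * Real.sin α + 2 * (q : ℝ) * Real.cos α = 2 * (k : ℝ) + 1

/-- If a sum of two squares is 4 times a square, both are even. -/
lemma both_even (X Y D : ℤ) (h : X ^ 2 + Y ^ 2 = 4 * D ^ 2) :
    ∃ x y, X = 2 * x ∧ Y = 2 * y := by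
  obtain ⟨x, hx⟩ | ⟨x, hx⟩ := Int.even_or_odd X <;>
    obtain ⟨y, hy⟩ | ⟨y, hy⟩ := Int.even_or_odd Y
  · exact ⟨x, y, by omega, by omega⟩
  · exfalso
    have h4 : (4 : ℤ) ∣ 1 := ⟨D ^ 2 - x ^ 2 - y ^ 2 - y, by subst hx hy; linear_combination h⟩
    norm_num at h4
  · exfalso
    have h4 : (4 : ℤ) ∣ 1 := ⟨D ^ 2 - y ^ 2 - x ^ 2 - x, by subst hx hy; linear_combination h⟩
    norm_num at h4
  · exfalso
    have h4 : (4 : ℤ) ∣ 2 :=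
      ⟨D ^ 2 - x ^ 2 - x - y ^ 2 - y, by subst hx hy; linear_combination h⟩
    norm_num at h4

/-- Descent lemma: no nontrivial solution. -/
lemma descent (p q a : ℤ) (ha : Odd a) :
    ∀ m : ℕ, ∀ D : ℤ, D.natAbs = m → D ≠ 0 → ∀ X Y : ℤ,
      X ^ 2 + Y ^ 2 = 4 * D ^ 2 → p * X + q * Y = a * D → False := by
  intro m
  induction m using Nat.strong_induction_on with
  | _ m ih =>
    intro D hm hD X Y h1 h2
    obtain ⟨x, y, hx, hy⟩ := both_even X Y D h1
    have h2' : 2 * (p * x + q * y) = a * D := by subst hx hy; linarith [h2]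
    have hdvd : (2 : ℤ) ∣ a * D := ⟨p * x + q * y, h2'.symm⟩
    have hD2 : (2 : ℤ) ∣ D := by
      rcases (Int.prime_two.2.2 _ _ hdvd) with h | h
      · exfalso; obtain ⟨t, ht⟩ := ha; omega
      · exact h
    obtain ⟨d, hd⟩ := hD2
    have hd0 : d ≠ 0 := by omega
    have h1' : x ^ 2 + y ^ 2 = 4 * d ^ 2 := by
      have : 4 * (x ^ 2 + y ^ 2) = 4 * (4 * d ^ 2) := by
        subst hx hy hd; linear_combination h1
      linarith
    have h2'' : p * x + q * y = a * d := by
      have : (2 : ℤ) * (p * x + q * y) = 2 * (a * d) := by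
        rw [h2', hd]; ring
      exact mul_left_cancel₀ two_ne_zero this
    exact ih d.natAbs (by omega) d rfl hd0 x y h1' h2''

theorem generating_triples_classification (α : ℝ) (p q k : ℤ)
    (hgen : GenTriple α p q k)
    (hmin : ∀ p' q' k' : ℤ, GenTriple α p' q' k' → p ^ 2 + q ^ 2 ≤ p' ^ 2 + q' ^ 2) :
    ∀ p' q' k' : ℤ, GenTriple α p' q' k' ↔
      ∃ n : ℤ, p' = (2 * n + 1) * p ∧ q' = (2 * n + 1) * q ∧ k' = (2 * n + 1) * k + n := by
  have hv : p ≠ 0 ∨ q ≠ 0 := by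
    by_contra hc
    push_neg at hc
    obtain ⟨hp0, hq0⟩ := hc
    have : (2 : ℝ) * (k : ℤ) + 1 = 0 := by
      rw [← hgen, hp0, hq0]; push_cast; ring
    have : (2 * k + 1 : ℤ) = 0 := by exact_mod_cast this
    omega
  intro p' q' k'
  constructor
  · intro hgen'
    unfold GenTriple at hgen hgen'
    set s := Real.sin α with hs
    set c := Real.cos α with hc
    -- colinearity
    have hD0 : p * q' - q * p' = 0 := by
      by_contra hD
      set X : ℤ := (2 * k + 1) * q' - (2 * k' + 1) * q with hXdef
      set Y : ℤ := (2 * k' + 1) * p - (2 * k + 1) * p' with hYdef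
      set D : ℤ := p * q' - q * p' with hDdef
      have hX : (X : ℝ) = 2 * D * s := by
        push_cast [hXdef, hDdef]
        linear_combination (q : ℝ) * hgen' - (q' : ℝ) * hgen
      have hY : (Y : ℝ) = 2 * D * c := by
        push_cast [hYdef, hDdef]
        linear_combination (p' : ℝ) * hgen - (p : ℝ) * hgen'
      have hXYr : (X : ℝ) ^ 2 + (Y : ℝ) ^ 2 = 4 * (D : ℝ) ^ 2 := by
        rw [hX, hY]
        linear_combination (4 * (D : ℝ) ^ 2) * (Real.sin_sq_add_cos_sq α)
      have h1 : X ^ 2 + Y ^ 2 = 4 * D ^ 2 := by exact_mod_cast hXYr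
      have h2 : p * X + q * Y = (2 * k + 1) * D := by rw [hXdef, hYdef, hDdef]; ring
      exact descent p q (2 * k + 1) ⟨k, by ring⟩ D.natAbs D rfl hD X Y h1 h2
    -- proportionality
    have hDr : (p : ℝ) * q' - (q : ℝ) * p' = 0 := by exact_mod_cast hD0
    have hpbR : (p' : ℝ) * (2 * k + 1) = (p : ℝ) * (2 * k' + 1) := by
      linear_combination (p : ℝ) * hgen' - (p' : ℝ) * hgen - 2 * c * hDr
    have hqbR : (q' : ℝ) * (2 * k + 1) = (q : ℝ) * (2 * k' + 1) := by
      linear_combination (q : ℝ) * hgen' - (q' : ℝ) * hgen + 2 * s * hDr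
    have hpb : p' * (2 * k + 1) = p * (2 * k' + 1) := by exact_mod_cast hpbR
    have hqb : q' * (2 * k + 1) = q * (2 * k' + 1) := by exact_mod_cast hqbR
    set a : ℤ := 2 * k + 1 with hadef
    set b : ℤ := 2 * k' + 1 with hbdef
    clear_value a b
    clear hpbR hqbR hDr hD0
    have ha0 : a ≠ 0 := by omega
    have hb0 : b ≠ 0 := by omega
    set g : ℤ := ((Int.gcd a b : ℕ) : ℤ) with hgdef
    have hga : g ∣ a := Int.gcd_dvd_left a b
    have hgb : g ∣ b := Int.gcd_dvd_right a b
    have hgn0 : Int.gcd a b ≠ 0 := fun h => ha0 ((Int.gcd_eq_zero_iff.mp h).1)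
    have hg0 : g ≠ 0 := by rw [hgdef]; exact_mod_cast hgn0
    clear_value g
    obtain ⟨a₁, ha₁⟩ := hga
    obtain ⟨b₁, hb₁⟩ := hgb
    have ha₁' : a₁ = a / g := by rw [ha₁]; rw [Int.mul_ediv_cancel_left _ hg0]
    have hb₁' : b₁ = b / g := by rw [hb₁]; rw [Int.mul_ediv_cancel_left _ hg0]
    have hcop : IsCoprime a₁ b₁ := by
      rw [Int.isCoprime_iff_gcd_eq_one, ha₁', hb₁', hgdef]
      exact Int.gcd_div_gcd_div_gcd (Int.gcd_pos_of_ne_zero_left b ha0)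
    have hkey : g * (p' * a₁) = g * (p * b₁) := by
      rw [show g * (p' * a₁) = p' * (g * a₁) by ring, ← ha₁,
        show g * (p * b₁) = p * (g * b₁) by ring, ← hb₁]
      exact hpb
    have hkeyq : g * (q' * a₁) = g * (q * b₁) := by
      rw [show g * (q' * a₁) = q' * (g * a₁) by ring, ← ha₁,
        show g * (q * b₁) = q * (g * b₁) by ring, ← hb₁]
      exact hqb
    have hpa₁ : p' * a₁ = p * b₁ := mul_left_cancel₀ hg0 hkey
    have hqa₁ : q' * a₁ = q * b₁ := mul_left_cancel₀ hg0 hkeyq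
    have hdvdp : a₁ ∣ p := by
      have : a₁ ∣ p * b₁ := ⟨p', by rw [← hpa₁]; ring⟩
      exact hcop.dvd_of_dvd_mul_right this
    have hdvdq : a₁ ∣ q := by
      have : a₁ ∣ q * b₁ := ⟨q', by rw [← hqa₁]; ring⟩
      exact hcop.dvd_of_dvd_mul_right this
    obtain ⟨p₀, hp₀⟩ := hdvdp
    obtain ⟨q₀, hq₀⟩ := hdvdq
    have ha10 : a₁ ≠ 0 := by
      intro h; rw [h, mul_zero] at ha₁; exact ha0 ha₁
    have hgodd : Odd g := by
      have : Odd a := ⟨k, by omega⟩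
      rw [ha₁, Int.odd_mul] at this
      exact this.1
    obtain ⟨k₀, hk₀⟩ := hgodd
    -- new generating triple
    have hgen₀ : GenTriple α p₀ q₀ k₀ := by
      unfold GenTriple
      rw [← hs, ← hc]
      have key : (a₁ : ℝ) * (2 * (p₀ : ℝ) * s + 2 * (q₀ : ℝ) * c) =
          (a₁ : ℝ) * (2 * (k₀ : ℝ) + 1) := by
        have hp₀R : (p : ℝ) = a₁ * p₀ := by exact_mod_cast congrArg (Int.cast : ℤ → ℝ) hp₀
        have hq₀R : (q : ℝ) = a₁ * q₀ := by exact_mod_cast congrArg (Int.cast : ℤ → ℝ) hq₀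
        have haR : (2 : ℝ) * k + 1 = g * a₁ := by
          have h1 : ((a : ℤ) : ℝ) = (g : ℝ) * a₁ := by exact_mod_cast congrArg (Int.cast : ℤ → ℝ) ha₁
          have h2 : ((a : ℤ) : ℝ) = 2 * (k : ℝ) + 1 := by exact_mod_cast congrArg (Int.cast : ℤ → ℝ) hadef
          rw [← h2, h1]
        have hgR : (g : ℝ) = 2 * k₀ + 1 := by exact_mod_cast congrArg (Int.cast : ℤ → ℝ) hk₀
        linear_combination hgen + haR + (a₁ : ℝ) * hgR - 2 * s * hp₀R - 2 * c * hq₀R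
      have ha1R : (a₁ : ℝ) ≠ 0 := Int.cast_ne_zero.mpr ha10
      exact mul_left_cancel₀ ha1R key
    have hmin₀ := hmin p₀ q₀ k₀ hgen₀
    have hS1 : 1 ≤ p ^ 2 + q ^ 2 := by
      have hq2 : 0 ≤ q ^ 2 := sq_nonneg q
      have hp2 : 0 ≤ p ^ 2 := sq_nonneg p
      rcases hv with h | h
      · have h2 : 0 < p ^ 2 := by positivity
        linarith [Int.lt_iff_add_one_le.mp h2]
      · have h2 : 0 < q ^ 2 := by positivity
        linarith [Int.lt_iff_add_one_le.mp h2]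
    have ha₁sq : a₁ = 1 ∨ a₁ = -1 := by
      have hSeq : p ^ 2 + q ^ 2 = a₁ ^ 2 * (p₀ ^ 2 + q₀ ^ 2) := by rw [hp₀, hq₀]; ring
      have hSnn : 0 ≤ p₀ ^ 2 + q₀ ^ 2 := by positivity
      have h1a : 1 ≤ a₁ ^ 2 := by
        have h2 : 0 < a₁ ^ 2 := by positivity
        linarith [Int.lt_iff_add_one_le.mp h2]
      have hS0 : 1 ≤ p₀ ^ 2 + q₀ ^ 2 := by
        have h2 : 0 < p₀ ^ 2 + q₀ ^ 2 := by nlinarith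
        linarith [Int.lt_iff_add_one_le.mp h2]
      have hle : a₁ ^ 2 ≤ 1 := by nlinarith
      have heq : a₁ * a₁ = 1 := by nlinarith
      exact Int.isUnit_iff.mp (IsUnit.of_mul_eq_one _ heq)
    obtain ⟨m, hm⟩ : ∃ m, b = a * m := by
      rcases ha₁sq with h | h
      · exact ⟨b₁, by rw [hb₁, ha₁, h]; ring⟩
      · exact ⟨-b₁, by rw [hb₁, ha₁, h]; ring⟩
    have hmodd : Odd m := by
      have hbodd : Odd b := ⟨k', by omega⟩
      rw [hm, Int.odd_mul] at hbodd
      exact hbodd.2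
    obtain ⟨n, hn⟩ := hmodd
    refine ⟨n, ?_, ?_, ?_⟩
    · have h : p' * a = (2 * n + 1) * p * a := by rw [hpb, hm, hn]; ring
      exact mul_right_cancel₀ ha0 h
    · have h : q' * a = (2 * n + 1) * q * a := by rw [hqb, hm, hn]; ring
      exact mul_right_cancel₀ ha0 h
    · have h2 : 2 * k' + 1 = (2 * k + 1) * (2 * n + 1) := by
        rw [← hadef, ← hbdef, hm, hn]
      linarith [h2]
  · rintro ⟨n, hp', hq', hk'⟩
    unfold GenTriple at hgen ⊢
    rw [hp', hq', hk']
    push_cast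
    linear_combination (2 * (n : ℝ) + 1) * hgen
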